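/- Bates' x% rule: assume r = δ and the symmetry condition ψ̃ = ψ (equivalently Π(dy) = e^{−y}Π(−dy)). Then for any x > 0, with strikes K_c = (1+x)F₀ and K_p = F₀/(1+x), the call and put prices satisfy c(F₀, K_c) = (1+x)·p(F₀, K_p), where c(S₀,K) = E[e^{−rT}(S₀e^{X_T} − K)⁺] and p(S₀,K) = E[e^{−rT}(K − S₀e^{X_T})⁺]. -/
import Mathlib


open MeasureTheory Real
open scoped ENNReal NNReal

/-- Bates' x% rule: with `r = δ` (so `E_Q[e^{X_T}] = 1`) and the
symmetry condition (the law of `e^{X_T}` under `Q` equals the law of `e^{−X_T}`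
under the dual measure `Q̃` with `dQ̃/dQ = e^{X_T}`), for any `x > 0`, with
strikes `K_c = (1+x)F₀` and `K_p = F₀/(1+x)`, we have
`c(F₀, K_c) = (1+x) p(F₀, K_p)`. -/
theorem bates_x_rule
    {Ω : Type*} [MeasurableSpace Ω] (Q : Measure Ω) [IsProbabilityMeasure Q]
    (X : Ω → ℝ) (hX : Measurable X) (T r F₀ x : ℝ)
    (hT : 0 < T) (hr : 0 ≤ r) (hF₀ : 0 < F₀) (hx : 0 < x)
    (hint : Integrable (fun ω => Real.exp (X ω)) Q)
    (hmart : ∫ ω, Real.exp (X ω) ∂Q = 1)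
    (hsym : Q.map (fun ω => Real.exp (X ω))
      = (Q.withDensity fun ω => ENNReal.ofReal (Real.exp (X ω))).map
          (fun ω => Real.exp (-X ω))) :
    Real.exp (-r * T) * ∫ ω, max (F₀ * Real.exp (X ω) - (1 + x) * F₀) 0 ∂Q
      = (1 + x) *
        (Real.exp (-r * T) *
          ∫ ω, max (F₀ / (1 + x) - F₀ * Real.exp (X ω)) 0 ∂Q) := by
  set f : ℝ → ℝ := fun s => max (F₀ * s - (1 + x) * F₀) 0 with hf
  have hfc : Continuous f := by
    apply Continuous.max
    · exact (continuous_const.mul continuous_id).sub continuous_const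
    · exact continuous_const
  have hmeas1 : AEMeasurable (fun ω => Real.exp (X ω)) Q :=
    (Real.measurable_exp.comp hX).aemeasurable
  have hmeas2 : AEMeasurable (fun ω => Real.exp (-X ω))
      (Q.withDensity fun ω => ENNReal.ofReal (Real.exp (X ω))) :=
    (Real.measurable_exp.comp hX.neg).aemeasurable
  have key : ∫ ω, max (F₀ * Real.exp (X ω) - (1 + x) * F₀) 0 ∂Q
      = (1 + x) * ∫ ω, max (F₀ / (1 + x) - F₀ * Real.exp (X ω)) 0 ∂Q := by
    have h1 : ∫ ω, max (F₀ * Real.exp (X ω) - (1 + x) * F₀) 0 ∂Q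
        = ∫ s, f s ∂(Q.map (fun ω => Real.exp (X ω))) := by
      rw [integral_map hmeas1 hfc.aestronglyMeasurable]
    have h2 : ∫ s, f s ∂(Q.map (fun ω => Real.exp (X ω)))
        = ∫ ω, f (Real.exp (-X ω))
            ∂(Q.withDensity fun ω => ENNReal.ofReal (Real.exp (X ω))) := by
      rw [hsym, integral_map hmeas2 hfc.aestronglyMeasurable]
    have h3 : ∫ ω, f (Real.exp (-X ω))
            ∂(Q.withDensity fun ω => ENNReal.ofReal (Real.exp (X ω)))
        = ∫ ω, Real.exp (X ω) * f (Real.exp (-X ω)) ∂Q := by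
      have hd : (fun ω => ENNReal.ofReal (Real.exp (X ω)))
          = fun ω => ((Real.exp (X ω)).toNNReal : ℝ≥0∞) := rfl
      have hg : Measurable fun ω => (Real.exp (X ω)).toNNReal := by
        exact (Measurable.exp hX).real_toNNReal
      rw [hd, integral_withDensity_eq_integral_smul hg]
      congr 1
      ext ω
      simp [NNReal.smul_def, Real.coe_toNNReal _ (Real.exp_pos _).le]
    have h4 : ∀ ω, Real.exp (X ω) * f (Real.exp (-X ω))
        = (1 + x) * max (F₀ / (1 + x) - F₀ * Real.exp (X ω)) 0 := by
      intro ω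
      have he : (0:ℝ) < Real.exp (X ω) := Real.exp_pos _
      have hx1 : (0:ℝ) < 1 + x := by linarith
      rw [hf]
      simp only []
      rw [mul_max_of_nonneg _ _ he.le, mul_max_of_nonneg _ _ hx1.le,
        mul_zero, mul_zero]
      congr 1
      have : Real.exp (X ω) * Real.exp (-X ω) = 1 := by
        rw [← Real.exp_add]; simp
      field_simp
      nlinarith [this]
    rw [h1, h2, h3]
    simp_rw [h4]
    rw [integral_const_mul]
  rw [key]; ring
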